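/- The Hyperbric H³ equals the square {(a,b) ∈ ℝ² : |a| + |b| ≤ 2/(3√3)}; that is, for c = (a,b) ∈ ℝ², the sequence (H_{3,c}^m((0,0)))_{m≥1} is bounded if and only if |a| + |b| ≤ 2/(3√3). -/

import Mathlib

/-- Hyperbolic (duplex) multiplication on ℝ². -/
def hMul (u v : ℝ × ℝ) : ℝ × ℝ := (u.1 * v.1 + u.2 * v.2, u.2 * v.1 + u.1 * v.2)

/-- p-fold ⋄-power of a hyperbolic number. -/
def hPow (w : ℝ × ℝ) : ℕ → ℝ × ℝ
  | 0 => (1, 0)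
  | n + 1 => hMul (hPow w n) w

/-- The hyperbolic polynomial H_{p,c}(w) = w^{⋄p} + c. -/
def hQ (p : ℕ) (c : ℝ × ℝ) (w : ℝ × ℝ) : ℝ × ℝ := hPow w p + c

noncomputable def hbK : ℝ := 2 / (3 * Real.sqrt 3)

def hbf (c t : ℝ) : ℝ := t^3 + c

lemma hb_s_pos : (0:ℝ) < Real.sqrt 3 := Real.sqrt_pos.mpr (by norm_num)
lemma hb_s_sq : (Real.sqrt 3)^2 = 3 := Real.sq_sqrt (by norm_num)
lemma hbK_pos : 0 < hbK := by unfold hbK; positivity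

lemma hb_bounded (c : ℝ) (hc : |c| ≤ hbK) :
    ∀ m : ℕ, |(hbf c)^[m] 0| ≤ 1 / Real.sqrt 3 := by
  intro m
  induction m with
  | zero => simpa using (by positivity : (0:ℝ) ≤ 1 / Real.sqrt 3)
  | succ n ih =>
    rw [Function.iterate_succ_apply']
    set x := (hbf c)^[n] 0 with hx
    have h1 : |x ^ 3 + c| ≤ |x|^3 + |c| := by
      calc |x^3 + c| ≤ |x^3| + |c| := abs_add_le _ _
        _ = |x|^3 + |c| := by rw [abs_pow]
    have hs := hb_s_pos
    have hsq := hb_s_sq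
    have hKe : hbK = 2 / (3 * Real.sqrt 3) := rfl
    have hxa : (0:ℝ) ≤ |x| := abs_nonneg _
    show |x^3 + c| ≤ 1 / Real.sqrt 3
    have h2 : |x|^3 ≤ (1 / Real.sqrt 3)^3 := by
      exact pow_le_pow_left₀ hxa ih 3
    have h3 : (1 / Real.sqrt 3)^3 + hbK = 1 / Real.sqrt 3 := by
      rw [hKe]
      field_simp
      nlinarith [hs, hsq]
    linarith

lemma hb_cubic_ineq (x : ℝ) (hx : 0 ≤ x) : -hbK ≤ x^3 - x := by
  have hs := hb_s_pos
  have hsq := hb_s_sq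
  have h1 : (0:ℝ) ≤ (x - 1/Real.sqrt 3)^2 * (x + 2/Real.sqrt 3) := by positivity
  have hKe : hbK = 2 / (3 * Real.sqrt 3) := rfl
  rw [hKe]
  have h3 : Real.sqrt 3 * Real.sqrt 3 = 3 := by nlinarith
  have key : (x - 1/Real.sqrt 3)^2 * (x + 2/Real.sqrt 3)
      = x^3 - x + 2/(3*Real.sqrt 3) := by
    have h4 : Real.sqrt 3 ^ 3 = 3 * Real.sqrt 3 := by
      nlinarith [h3]
    field_simp
    ring_nf
    rw [h4, hsq]; ring
  nlinarith [h1, key]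

lemma hb_escape (c : ℝ) (hc : hbK < c) :
    ∀ m : ℕ, c + m * (c - hbK) ≤ (hbf c)^[m+1] 0 := by
  intro m
  induction m with
  | zero => simp [hbf]
  | succ n ih =>
    rw [Function.iterate_succ_apply']
    set x := (hbf c)^[n+1] 0 with hx
    have hx0 : 0 ≤ x := by
      have h5 : (0:ℝ) ≤ (n:ℝ) * (c - hbK) :=
        mul_nonneg (Nat.cast_nonneg n) (by linarith)
      nlinarith [hbK_pos, ih]
    have := hb_cubic_ineq x hx0
    have goal : c + ((n:ℝ) + 1) * (c - hbK) ≤ x^3 + c := by nlinarith [ih]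
    show c + ((n+1:ℕ):ℝ) * (c - hbK) ≤ x^3 + c
    push_cast
    linarith

lemma hb_neg (c : ℝ) : ∀ m : ℕ, (hbf (-c))^[m] 0 = -((hbf c)^[m] 0) := by
  intro m
  induction m with
  | zero => simp
  | succ n ih =>
    rw [Function.iterate_succ_apply', Function.iterate_succ_apply', ih]
    show (-((hbf c)^[n] 0))^3 + (-c) = -(((hbf c)^[n] 0)^3 + c)
    ring

lemma hb_unbounded (c M : ℝ) (hc : hbK < |c|)
    (h : ∀ m : ℕ, 1 ≤ m → |(hbf c)^[m] 0| ≤ M) : False := by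
  set d := |c| with hd
  have habs : ∀ m : ℕ, |(hbf d)^[m] 0| = |(hbf c)^[m] 0| := by
    intro m
    rcases abs_choice c with h1 | h1
    · rw [hd, h1]
    · rw [hd, h1, hb_neg c m, abs_neg]
  have hesc := hb_escape d hc
  obtain ⟨n, hn⟩ := exists_nat_gt ((M - d) / (d - hbK))
  have hdn : 0 < d - hbK := by linarith
  have h1 : M - d < n * (d - hbK) := by
    rw [div_lt_iff₀ hdn] at hn; linarith
  have h2 : d + n * (d - hbK) ≤ (hbf d)^[n+1] 0 := hesc n
  have h3 : (hbf d)^[n+1] 0 ≤ |(hbf d)^[n+1] 0| := le_abs_self _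
  have h4 : |(hbf c)^[n+1] 0| ≤ M := h (n+1) (by omega)
  rw [habs] at h3
  linarith

lemma hQ3_eval (a b x y : ℝ) :
    hQ 3 (a, b) (x, y) = (x^3 + 3*x*y^2 + a, 3*x^2*y + y^3 + b) := by
  show hPow (x,y) 3 + (a,b) = _
  simp only [hPow, hMul, Prod.mk_add_mk]
  rw [Prod.mk.injEq]; constructor <;> ring

lemma hb_conj (a b : ℝ) (m : ℕ) :
    ((hQ 3 (a,b))^[m] (0,0)).1 + ((hQ 3 (a,b))^[m] (0,0)).2 = (hbf (a+b))^[m] 0 ∧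
    ((hQ 3 (a,b))^[m] (0,0)).1 - ((hQ 3 (a,b))^[m] (0,0)).2 = (hbf (a-b))^[m] 0 := by
  induction m with
  | zero => simp
  | succ n ih =>
    rw [Function.iterate_succ_apply', Function.iterate_succ_apply',
        Function.iterate_succ_apply']
    obtain ⟨h1, h2⟩ := ih
    set w := (hQ 3 (a,b))^[n] (0,0) with hw
    have : hQ 3 (a,b) w = hQ 3 (a,b) (w.1, w.2) := by rw [Prod.mk.eta]
    rw [this, hQ3_eval]
    constructor
    · show (w.1^3 + 3*w.1*w.2^2 + a) + (3*w.1^2*w.2 + w.2^3 + b)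
        = ((hbf (a+b))^[n] 0)^3 + (a+b)
      rw [← h1]; ring
    · show (w.1^3 + 3*w.1*w.2^2 + a) - (3*w.1^2*w.2 + w.2^3 + b)
        = ((hbf (a-b))^[n] 0)^3 + (a-b)
      rw [← h2]; ring

lemma hb_norm (w : ℝ × ℝ) : ‖w‖ = max |w.1| |w.2| := by
  rw [Prod.norm_def, Real.norm_eq_abs, Real.norm_eq_abs]

theorem hyperbric_eq_square (a b : ℝ) :
    (∃ M : ℝ, ∀ m : ℕ, 1 ≤ m → ‖(hQ 3 (a, b))^[m] (0, 0)‖ ≤ M) ↔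
      |a| + |b| ≤ 2 / (3 * Real.sqrt 3) := by
  have hKe : (2 / (3 * Real.sqrt 3) : ℝ) = hbK := rfl
  rw [hKe]
  constructor
  · rintro ⟨M, hM⟩
    by_contra hcon
    push_neg at hcon
    -- find c ∈ {a+b, a-b} with hbK < |c|
    have key : ∀ c : ℝ, hbK < |c| →
        (∀ m : ℕ, 1 ≤ m → |(hbf c)^[m] 0| ≤ 2 * M) → False := fun c h1 h2 =>
      hb_unbounded c (2*M) h1 h2
    have bnd : ∀ m : ℕ, 1 ≤ m → |(hbf (a+b))^[m] 0| ≤ 2 * M ∧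
        |(hbf (a-b))^[m] 0| ≤ 2 * M := by
      intro m hm
      obtain ⟨h1, h2⟩ := hb_conj a b m
      set w := (hQ 3 (a,b))^[m] (0,0) with hw
      have hn := hb_norm w
      have hMm := hM m hm
      rw [hn] at hMm
      have hx : |w.1| ≤ M := le_trans (le_max_left _ _) hMm
      have hy : |w.2| ≤ M := le_trans (le_max_right _ _) hMm
      constructor
      · rw [← h1]; calc |w.1 + w.2| ≤ |w.1| + |w.2| := abs_add_le _ _
          _ ≤ 2 * M := by linarith
      · rw [← h2]; calc |w.1 - w.2| ≤ |w.1| + |w.2| := abs_sub _ _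
          _ ≤ 2 * M := by linarith
    rcases le_or_gt 0 a with ha | ha <;> rcases le_or_gt 0 b with hb | hb
    · refine key (a+b) ?_ (fun m hm => (bnd m hm).1)
      rw [abs_of_nonneg ha, abs_of_nonneg hb] at hcon
      rw [abs_of_nonneg (by linarith : (0:ℝ) ≤ a + b)]
      linarith
    · refine key (a-b) ?_ (fun m hm => (bnd m hm).2)
      rw [abs_of_nonneg ha, abs_of_neg hb] at hcon
      rw [abs_of_nonneg (by linarith : (0:ℝ) ≤ a - b)]
      linarith
    · refine key (a-b) ?_ (fun m hm => (bnd m hm).2)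
      rw [abs_of_neg ha, abs_of_nonneg hb] at hcon
      rw [abs_of_nonpos (by linarith : a - b ≤ 0)]
      linarith
    · refine key (a+b) ?_ (fun m hm => (bnd m hm).1)
      rw [abs_of_neg ha, abs_of_neg hb] at hcon
      rw [abs_of_nonpos (by linarith : a + b ≤ 0)]
      linarith
  · intro h
    refine ⟨1 / Real.sqrt 3, fun m _ => ?_⟩
    have hp : |a + b| ≤ hbK := le_trans (abs_add_le a b) h
    have hq : |a - b| ≤ hbK := le_trans (abs_sub a b) h
    have b1 := hb_bounded (a+b) hp m
    have b2 := hb_bounded (a-b) hq m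
    obtain ⟨h1, h2⟩ := hb_conj a b m
    set w := (hQ 3 (a,b))^[m] (0,0) with hw
    rw [← h1] at b1
    rw [← h2] at b2
    rw [hb_norm w]
    have e1 : |w.1 + w.2| ≤ 1 / Real.sqrt 3 := b1
    have e2 : |w.1 - w.2| ≤ 1 / Real.sqrt 3 := b2
    rw [abs_le] at e1 e2
    rw [max_le_iff]
    constructor <;> rw [abs_le] <;> constructor <;> cases' e1 with e1a e1b <;>
      cases' e2 with e2a e2b <;> linarith
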